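/- For every n ≥ 2, the standard example S_n has Dushnik–Miller dimension exactly n: dim(S_n) = n. -/

import Mathlib

/-!
Common definitions for formalizing dimension theory of finite posets,
following Kozik–Micek–Trotter, "Dimension is polynomial in height for
posets with planar cover graphs".
-/

namespace PlanarDim

variable {α : Type*}

/-- Two elements of a poset are incomparable. -/
def Incomp [PartialOrder α] (a b : α) : Prop := ¬ a ≤ b ∧ ¬ b ≤ a

/-- `Inc(P)`: the set of ordered pairs of incomparable elements. -/
def incPairs (α : Type*) [PartialOrder α] : Set (α × α) := {p | Incomp p.1 p.2}

/-- A linear order `L` on the ground set is a linear extension of the partial order. -/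
def IsLinExt [PartialOrder α] (L : LinearOrder α) : Prop :=
  ∀ x y : α, x ≤ y → L.le x y

/-- A set `I` of ordered pairs is reversible if some linear extension of the
partial order reverses every pair of `I` (i.e. puts the second coordinate
strictly below the first). -/
def Reversible [PartialOrder α] (I : Set (α × α)) : Prop :=
  ∃ L : LinearOrder α, IsLinExt L ∧ ∀ p ∈ I, L.lt p.2 p.1

/-- The cyclic successor on `Fin k`. -/
def nextIdx {k : ℕ} (i : Fin k) : Fin k := ⟨(i.1 + 1) % k, Nat.mod_lt _ i.pos⟩

/-- `((x 0, y 0), …, (x (k-1), y (k-1)))` is an alternating cycle: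
`k ≥ 2`, each pair is incomparable, and `x i ≤ y (i+1)` cyclically. -/
def IsAltCycle [PartialOrder α] {k : ℕ} (x y : Fin k → α) : Prop :=
  2 ≤ k ∧ (∀ i, Incomp (x i) (y i)) ∧ ∀ i, x i ≤ y (nextIdx i)

/-- A strict alternating cycle: `k ≥ 2`, each pair is incomparable, and
`x i ≤ y j` holds exactly when `j = i + 1` cyclically. -/
def IsStrictAltCycle [PartialOrder α] {k : ℕ} (x y : Fin k → α) : Prop :=
  2 ≤ k ∧ (∀ i, Incomp (x i) (y i)) ∧ ∀ i j, x i ≤ y j ↔ j = nextIdx i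

/-- `dim(I)`: the least `d ≥ 1` such that `I` can be covered by `d` reversible
subsets of `Inc(P)`. -/
noncomputable def dimI [PartialOrder α] (I : Set (α × α)) : ℕ :=
  sInf {d | 1 ≤ d ∧ ∃ J : Fin d → Set (α × α),
    (∀ i, J i ⊆ incPairs α ∧ Reversible (J i)) ∧ I ⊆ ⋃ i, J i}

/-- The Dushnik–Miller dimension of a poset: the least `d ≥ 1` for which there
are linear orders `L 0, …, L (d-1)` on the ground set with `x ≤ y` in the poset
iff `x ≤ y` in every `L i`. -/
noncomputable def posetDim (α : Type*) [PartialOrder α] : ℕ :=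
  sInf {d | 1 ≤ d ∧ ∃ L : Fin d → LinearOrder α,
    ∀ x y : α, x ≤ y ↔ ∀ i, (L i).le x y}

/-- The height of a poset: the maximum number of elements in a chain. -/
noncomputable def posetHeight (α : Type*) [PartialOrder α] : ℕ :=
  sSup {n | ∃ s : Finset α, s.card = n ∧ IsChain (· ≤ ·) (↑s : Set α)}

/-- The cover graph of a poset: distinct `x` and `y` are adjacent iff one
covers the other. -/
def coverGraph (α : Type*) [PartialOrder α] : SimpleGraph α where
  Adj x y := x ⋖ y ∨ y ⋖ x
  symm := ⟨fun x y h => Or.symm h⟩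
  loopless := ⟨fun x h => by rcases h with h | h <;> exact absurd h.lt (lt_irrefl x)⟩

/-- `Min(P)`: the set of minimal elements. -/
def minSet (α : Type*) [PartialOrder α] : Set α := {x | IsMin x}

/-- `Max(P)`: the set of maximal elements. -/
def maxSet (α : Type*) [PartialOrder α] : Set α := {x | IsMax x}

/-- `Inc(Min(P), Max(P))`: incomparable pairs `(a, b)` with `a` minimal and
`b` maximal. -/
def incMinMax (α : Type*) [PartialOrder α] : Set (α × α) :=
  {p | p ∈ incPairs α ∧ p.1 ∈ minSet α ∧ p.2 ∈ maxSet α}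

/-- `WReach_r[G, σ, v]`: the set of vertices `u` weakly `r`-reachable from `v`
in the ordering `σ`: there is a path from `v` to `u` of length at most `r` all
of whose vertices are `≥ u` in `σ`. -/
def WReach (G : SimpleGraph α) (σ : LinearOrder α) (r : ℕ) (v : α) : Set α :=
  {u | ∃ p : G.Walk v u, p.IsPath ∧ p.length ≤ r ∧ ∀ w ∈ p.support, σ.le u w}

/-- The weak `r`-coloring number of a finite graph: the minimum over vertex
orderings `σ` of the maximum over vertices `v` of `|WReach_r[G, σ, v]|`. -/
noncomputable def wcol (α : Type*) [Fintype α] (G : SimpleGraph α) (r : ℕ) : ℕ :=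
  sInf {c | ∃ σ : LinearOrder α,
    c = Finset.univ.sup fun v => (WReach G σ r v).ncard}

end PlanarDim

open PlanarDim

/-- The order relation of the standard example `S n`: `a i = Sum.inl i`,
`b j = Sum.inr j`, and `a i < b j` iff `i ≠ j` are the only strict
comparabilities. -/
def stdLe (n : ℕ) (x y : Fin n ⊕ Fin n) : Prop :=
  x = y ∨ ∃ i j : Fin n, x = Sum.inl i ∧ y = Sum.inr j ∧ i ≠ j

/-- The standard example `S n` as a partial order on `Fin n ⊕ Fin n`. -/
def stdExampleOrder (n : ℕ) : PartialOrder (Fin n ⊕ Fin n) where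
  le := stdLe n
  lt x y := stdLe n x y ∧ ¬ stdLe n y x
  lt_iff_le_not_ge _ _ := Iff.rfl
  le_refl x := Or.inl rfl
  le_trans x y z hxy hyz := by
    rcases hxy with rfl | ⟨i, j, rfl, rfl, hij⟩
    · exact hyz
    · rcases hyz with rfl | ⟨i', j', h1, h2, hij'⟩
      · exact Or.inr ⟨i, j, rfl, rfl, hij⟩
      · exact absurd h1 (by simp)
  le_antisymm x y hxy hyx := by
    rcases hxy with rfl | ⟨i, j, rfl, rfl, hij⟩
    · rfl
    · rcases hyx with h | ⟨i', j', h1, h2, hij'⟩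
      · exact h.symm
      · exact absurd h1 (by simp)

/-- Rank function used to build the `i`-th linear extension in the realizer
of the standard example. -/
def rk (n : ℕ) (i : Fin n) : Fin n ⊕ Fin n → ℕ
  | Sum.inl j => if j = i then n + 1 else j
  | Sum.inr j => if j = i then n else n + 2 + j

lemma rk_inj (n : ℕ) (i : Fin n) : Function.Injective (rk n i) := by
  intro x y h
  cases x with
  | inl j => cases y with
    | inl l =>
      have hj := j.isLt; have hl := l.isLt
      simp only [rk] at h
      split_ifs at h with h1 h2 h2 <;>
        [skip; omega; omega; skip] <;> [ (subst h1 h2; rfl); exact congrArg Sum.inl (Fin.ext h)]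
    | inr l =>
      have hj := j.isLt; have hl := l.isLt
      simp only [rk] at h
      split_ifs at h <;> omega
  | inr j => cases y with
    | inl l =>
      have hj := j.isLt; have hl := l.isLt
      simp only [rk] at h
      split_ifs at h <;> omega
    | inr l =>
      have hj := j.isLt; have hl := l.isLt
      simp only [rk] at h
      split_ifs at h with h1 h2 h2 <;>
        [skip; omega; omega; skip] <;> [ (subst h1 h2; rfl); exact congrArg Sum.inr (Fin.ext (by omega))]

lemma not_stdLe_inl_inr_self (n : ℕ) (i : Fin n) : ¬ stdLe n (Sum.inl i) (Sum.inr i) := by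
  rintro (h | ⟨i', j', h1, h2, hne⟩)
  · exact Sum.inl_ne_inr h
  · apply hne
    rw [Sum.inl.injEq] at h1
    rw [Sum.inr.injEq] at h2
    rw [← h1, ← h2]

lemma stdLe_realizer (n : ℕ) (hn : 2 ≤ n) (x y : Fin n ⊕ Fin n) :
    stdLe n x y ↔ ∀ i : Fin n, rk n i x ≤ rk n i y := by
  constructor
  · rintro (rfl | ⟨j, l, rfl, rfl, hjl⟩) i
    · exact le_refl _
    · have hj := j.isLt; have hl := l.isLt
      simp only [rk]
      split_ifs with h1 h2 h2
      · exact absurd (h1.trans h2.symm) hjl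
      · omega
      · omega
      · omega
  · intro h
    by_contra hxy
    cases x with
    | inl j => cases y with
      | inl l =>
        have hjl : j ≠ l := by rintro rfl; exact hxy (Or.inl rfl)
        have := h j
        have hj := j.isLt; have hl := l.isLt
        have e1 : rk n j (Sum.inl j) = n + 1 := by simp [rk]
        have e2 : rk n j (Sum.inl l) = l := by simp [rk, Ne.symm hjl]
        rw [e1, e2] at this
        omega
      | inr l =>
        have hjl : j = l := by
          by_contra hne; exact hxy (Or.inr ⟨j, l, rfl, rfl, hne⟩)
        subst hjl
        have := h j
        have e1 : rk n j (Sum.inl j) = n + 1 := by simp [rk]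
        have e2 : rk n j (Sum.inr j) = n := by simp [rk]
        rw [e1, e2] at this
        omega
    | inr j => cases y with
      | inl l =>
        obtain ⟨i, hij⟩ : ∃ i : Fin n, i ≠ j := by
          rcases Nat.lt_or_ge 0 j.val with h0 | h0
          · exact ⟨⟨0, by omega⟩, by intro he; rw [Fin.ext_iff] at he; simp at he; omega⟩
          · exact ⟨⟨1, by omega⟩, by intro he; rw [Fin.ext_iff] at he; simp at he; omega⟩
        have := h i
        have hl := l.isLt
        have e1 : rk n i (Sum.inr j) = n + 2 + j := by simp [rk, Ne.symm hij]
        have e2 : rk n i (Sum.inl l) ≤ n + 1 := by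
          simp only [rk]; split_ifs <;> omega
        rw [e1] at this
        omega
      | inr l =>
        have hjl : j ≠ l := by rintro rfl; exact hxy (Or.inl rfl)
        have := h l
        have e1 : rk n l (Sum.inr j) = n + 2 + j := by simp [rk, hjl]
        have e2 : rk n l (Sum.inr l) = n := by simp [rk]
        rw [e1, e2] at this
        omega

/-- For every `n ≥ 2`, the standard example `S n` has
Dushnik–Miller dimension exactly `n`. -/
theorem posetDim_standardExample (n : ℕ) (hn : 2 ≤ n) :
    @posetDim (Fin n ⊕ Fin n) (stdExampleOrder n) = n := by
  unfold posetDim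
  have hmem : n ∈ {d | 1 ≤ d ∧ ∃ L : Fin d → LinearOrder (Fin n ⊕ Fin n),
      ∀ x y : Fin n ⊕ Fin n, (stdExampleOrder n).le x y ↔ ∀ i, (L i).le x y} :=
    ⟨by omega, fun i => LinearOrder.lift' (rk n i) (rk_inj n i),
      fun x y => stdLe_realizer n hn x y⟩
  have hlb : ∀ d ∈ {d | 1 ≤ d ∧ ∃ L : Fin d → LinearOrder (Fin n ⊕ Fin n),
      ∀ x y : Fin n ⊕ Fin n, (stdExampleOrder n).le x y ↔ ∀ i, (L i).le x y}, n ≤ d := by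
    rintro d ⟨hd1, L, hL⟩
    by_contra hdn
    push_neg at hdn
    have hrev : ∀ i : Fin n, ∃ k : Fin d, ¬ (L k).le (Sum.inl i) (Sum.inr i) := by
      intro i
      by_contra hc
      push_neg at hc
      exact not_stdLe_inl_inr_self n i ((hL (Sum.inl i) (Sum.inr i)).mpr hc)
    choose k hk using hrev
    obtain ⟨i, j, hij, hkij⟩ :=
      Fintype.exists_ne_map_eq_of_card_lt k (by simpa using hdn)
    have h1 : ¬ (L (k i)).le (Sum.inl i) (Sum.inr i) := hk i
    have h2 : ¬ (L (k i)).le (Sum.inl j) (Sum.inr j) := by rw [hkij]; exact hk j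
    have h2' : (L (k i)).le (Sum.inr j) (Sum.inl j) :=
      ((L (k i)).le_total _ _).resolve_left h2
    have h3 : (L (k i)).le (Sum.inl i) (Sum.inr j) :=
      (hL _ _).mp (show stdLe n (Sum.inl i) (Sum.inr j) from
        Or.inr ⟨i, j, rfl, rfl, hij⟩) (k i)
    have h4 : (L (k i)).le (Sum.inl j) (Sum.inr i) :=
      (hL _ _).mp (show stdLe n (Sum.inl j) (Sum.inr i) from
        Or.inr ⟨j, i, rfl, rfl, hij.symm⟩) (k i)
    exact h1 ((L (k i)).le_trans _ _ _ h3 ((L (k i)).le_trans _ _ _ h2' h4))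
  exact le_antisymm (Nat.sInf_le hmem) (le_csInf ⟨n, hmem⟩ hlb)
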